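/- Let n ≥ 2, let D ⊆ ℝ^{n−1} be a bounded open set, ℓ > 0, and Ω = D × (0,ℓ). Suppose u is C² on Ω̄ and u_y(x,0) = 0 for every x ∈ D. Then the function Ju, defined by Ju(x,y) = ∫₀^y u(x,t) dt, is twice continuously differentiable on Ω, and for every (x,y) ∈ Ω, Δ(Ju)(x,y) = ∫₀^y Δu(x,t) dt. -/

import Mathlib

open MeasureTheory Set Bornology
open Metric intervalIntegral Topology Filter

noncomputable section

set_option linter.unusedSectionVars false
set_option linter.unusedVariables false
set_option maxHeartbeats 1000000
set_option synthInstance.maxHeartbeats 400000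

section Aux

variable {E : Type*} [NormedAddCommGroup E] [NormedSpace ℝ E]
variable {F : Type*} [NormedAddCommGroup F] [NormedSpace ℝ F] [CompleteSpace F]

/-- `(v, s) ↦ (v, 0)`. -/
def prjE (E : Type*) [NormedAddCommGroup E] [NormedSpace ℝ E] : (E × ℝ) →L[ℝ] E × ℝ :=
  (ContinuousLinearMap.fst ℝ E ℝ).prod 0

@[simp] lemma prjE_apply (z : E × ℝ) : prjE E z = (z.1, 0) := rfl

lemma norm_prjE_le : ‖prjE E‖ ≤ 1 := by
  refine ContinuousLinearMap.opNorm_le_bound _ zero_le_one fun z => ?_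
  rw [one_mul]
  have : ‖prjE E z‖ = ‖z.1‖ := by simp [Prod.norm_def]
  rw [this]
  exact norm_fst_le z

/-- The integral operator. -/
def Jop (f : E × ℝ → F) (q : E × ℝ) : F := ∫ t in (0:ℝ)..q.2, f (q.1, t)

/-- Candidate derivative of `Jop f`. -/
def Lop (f : E × ℝ → F) (p : E × ℝ) : (E × ℝ) →L[ℝ] F :=
  (∫ t in (0:ℝ)..p.2, (fderiv ℝ f (p.1, t)).comp (prjE E)) +
    (ContinuousLinearMap.snd ℝ E ℝ).smulRight (f p)

lemma abs_sub_le_uIcc {x y t : ℝ} (ht : t ∈ Set.uIcc x y) : |t - x| ≤ |y - x| := by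
  rcases Set.mem_uIcc.1 ht with ⟨h1, h2⟩ | ⟨h1, h2⟩
  · rw [abs_of_nonneg (by linarith)]
    exact le_trans (by linarith) (le_abs_self _)
  · rw [abs_of_nonpos (by linarith)]
    exact le_trans (by linarith) (neg_le_abs _)

lemma mul_mem_uIcc' {y c : ℝ} (hc : c ∈ Icc (0:ℝ) 1) : y * c ∈ uIcc (0:ℝ) y := by
  rcases le_or_gt 0 y with h | h
  · exact Set.mem_uIcc.2 (Or.inl ⟨mul_nonneg h hc.1, by nlinarith [hc.1, hc.2]⟩)
  · exact Set.mem_uIcc.2 (Or.inr ⟨by nlinarith [hc.1, hc.2], by nlinarith [hc.1, hc.2]⟩)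

lemma mem_slice {a b : ℝ} (ha : a < 0) (hb : 0 < b) {y : ℝ} (hy : y ∈ Ioo a b) :
    uIcc (0:ℝ) y ⊆ Ioo a b :=
  Set.ordConnected_Ioo.uIcc_subset ⟨ha, hb⟩ hy

variable {s : Set E} {a b : ℝ} {f : E × ℝ → F} {p : E × ℝ}

lemma contOn_slice (hf : ContinuousOn f (s ×ˢ Ioo a b)) {x : E} (hx : x ∈ s) {I : Set ℝ}
    (hI : I ⊆ Ioo a b) : ContinuousOn (fun t => f (x, t)) I :=
  hf.comp ((continuous_const.prodMk continuous_id).continuousOn) fun t ht => ⟨hx, hI ht⟩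

lemma locK (hs : IsOpen s) (ha : a < 0) (hb : 0 < b) (hp : p ∈ s ×ˢ Ioo a b) :
    ∃ r > 0, ∃ c d : ℝ, a < c ∧ d < b ∧ closedBall p.1 r ⊆ s ∧
      (∀ y : ℝ, |y - p.2| ≤ r → uIcc (0:ℝ) y ⊆ Icc c d) ∧ Icc c d ⊆ Ioo a b := by
  have hp1 : p.1 ∈ s := hp.1
  have hp2 : p.2 ∈ Ioo a b := hp.2
  have h1 : a < min 0 p.2 := lt_min ha hp2.1
  have h2 : max 0 p.2 < b := max_lt hb hp2.2
  have hm0 : min 0 p.2 ≤ 0 := min_le_left _ _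
  have hM0 : (0:ℝ) ≤ max 0 p.2 := le_max_left _ _
  have hmp : min 0 p.2 ≤ p.2 := min_le_right _ _
  have hpM : p.2 ≤ max 0 p.2 := le_max_right _ _
  obtain ⟨r0, hr0, hball⟩ : ∃ r0 > 0, closedBall p.1 r0 ⊆ s := by
    rcases Metric.mem_nhds_iff.1 (hs.mem_nhds hp1) with ⟨ρ, hρ, hb'⟩
    exact ⟨ρ/2, by linarith, (closedBall_subset_ball (by linarith)).trans hb'⟩
  set r := min r0 (min ((min 0 p.2 - a)/2) ((b - max 0 p.2)/2)) with hr_def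
  have hrr0 : r ≤ r0 := min_le_left _ _
  have hr1 : r ≤ (min 0 p.2 - a)/2 := le_trans (min_le_right _ _) (min_le_left _ _)
  have hr2 : r ≤ (b - max 0 p.2)/2 := le_trans (min_le_right _ _) (min_le_right _ _)
  have hrpos : 0 < r := lt_min hr0 (lt_min (by linarith) (by linarith))
  refine ⟨r, hrpos, (a + min 0 p.2)/2, (max 0 p.2 + b)/2, by linarith, by linarith,
    (closedBall_subset_closedBall hrr0).trans hball, ?_,
    fun t ht => ⟨by simp at ht ⊢; linarith [ht.1], by simp at ht ⊢; linarith [ht.2]⟩⟩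
  intro y hy
  rcases abs_le.1 hy with ⟨hy1, hy2⟩
  refine Set.ordConnected_Icc.uIcc_subset ⟨by linarith, by linarith⟩ ⟨by linarith, by linarith⟩

section Proper
variable [ProperSpace E]

lemma continuousAt_Jop (hs : IsOpen s) (ha : a < 0) (hb : 0 < b)
    (hf : ContinuousOn f (s ×ˢ Ioo a b)) (hp : p ∈ s ×ˢ Ioo a b) :
    ContinuousAt (Jop f) p := by
  obtain ⟨r, hr, c, d, hac, hdb, hballs, huIcc, hIcc⟩ := locK hs ha hb hp
  have hK : IsCompact (closedBall p.1 r ×ˢ Icc c d) := (isCompact_closedBall _ _).prod isCompact_Icc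
  have hKV : closedBall p.1 r ×ˢ Icc c d ⊆ s ×ˢ Ioo a b := Set.prod_mono hballs hIcc
  obtain ⟨M, hM⟩ := hK.exists_bound_of_continuousOn (hf.mono hKV)
  have hremb : ∀ q : E × ℝ, q ∈ closedBall p r → ∀ t ∈ uIcc (0:ℝ) q.2,
      (q.1, t) ∈ closedBall p.1 r ×ˢ Icc c d := by
    intro q hq t ht
    rw [Metric.mem_closedBall, Prod.dist_eq] at hq
    exact ⟨Metric.mem_closedBall.2 (le_trans (le_max_left _ _) hq),
      huIcc q.2 (by rw [← Real.dist_eq]; exact le_trans (le_max_right _ _) hq) ht⟩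
  have hJ : Jop f = fun q : E × ℝ => q.2 • ∫ s' in (0:ℝ)..1, f (q.1, q.2 * s') := by
    funext q
    have h := intervalIntegral.smul_integral_comp_mul_left (f := fun t => f (q.1, t))
      (a := (0:ℝ)) (b := 1) q.2
    rw [mul_zero, mul_one] at h
    exact h.symm
  rw [hJ]
  refine ContinuousAt.smul continuous_snd.continuousAt ?_
  refine continuousAt_of_dominated_interval (bound := fun _ => M) ?_ ?_ intervalIntegrable_const ?_
  · filter_upwards [(hs.prod isOpen_Ioo).mem_nhds hp] with q hq
    have hcont : ContinuousOn (fun s' => f (q.1, q.2 * s')) (Icc 0 1) :=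
      hf.comp ((continuous_const.prodMk (continuous_const.mul continuous_id)).continuousOn)
        fun s' hs' => ⟨hq.1, mem_slice ha hb hq.2 (mul_mem_uIcc' hs')⟩
    exact (hcont.mono (by rw [uIoc_of_le (zero_le_one)]; exact Ioc_subset_Icc_self)).aestronglyMeasurable
      measurableSet_uIoc
  · filter_upwards [closedBall_mem_nhds p hr] with q hq
    refine Filter.Eventually.of_forall fun s' hs' => ?_
    have hs'' : s' ∈ Icc (0:ℝ) 1 := by
      rw [uIoc_of_le zero_le_one] at hs'; exact Ioc_subset_Icc_self hs'
    exact hM _ (hremb q hq _ (mul_mem_uIcc' hs''))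
  · refine Filter.Eventually.of_forall fun s' hs' => ?_
    have hs'' : s' ∈ Icc (0:ℝ) 1 := by
      rw [uIoc_of_le zero_le_one] at hs'; exact Ioc_subset_Icc_self hs'
    have hmem : (p.1, p.2 * s') ∈ s ×ˢ Ioo a b := ⟨hp.1, mem_slice ha hb hp.2 (mul_mem_uIcc' hs'')⟩
    exact ContinuousAt.comp (hf.continuousAt ((hs.prod isOpen_Ioo).mem_nhds hmem))
      ((continuous_fst.prodMk (continuous_snd.mul continuous_const)).continuousAt)


lemma abs_sub_le_uIcc' {x y t : ℝ} (ht : t ∈ Set.uIcc x y) : |t - x| ≤ |y - x| := by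
  rcases Set.mem_uIcc.1 ht with ⟨h1, h2⟩ | ⟨h1, h2⟩
  · rw [abs_of_nonneg (by linarith)]
    exact le_trans (by linarith) (le_abs_self _)
  · rw [abs_of_nonpos (by linarith)]
    exact le_trans (by linarith) (neg_le_abs _)

lemma hasFDerivAt_moving (hs : IsOpen s) (ha : a < 0) (hb : 0 < b)
    (hf : ContinuousOn f (s ×ˢ Ioo a b)) (hp : p ∈ s ×ˢ Ioo a b) :
    HasFDerivAt (fun q : E × ℝ => ∫ t in p.2..q.2, f (q.1, t))
      ((ContinuousLinearMap.snd ℝ E ℝ).smulRight (f p)) p := by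
  have hVopen : IsOpen (s ×ˢ Ioo a b) := hs.prod isOpen_Ioo
  rw [hasFDerivAt_iff_isLittleO_nhds_zero]
  rw [Asymptotics.isLittleO_iff]
  intro ε hε
  have hev : ∀ᶠ z in 𝓝 p, ‖f z - f p‖ < ε ∧ z ∈ s ×ˢ Ioo a b := by
    have h1 : ContinuousAt (fun z => ‖f z - f p‖) p :=
      ((hf.continuousAt (hVopen.mem_nhds hp)).sub continuousAt_const).norm
    have h2 : ∀ᶠ z in 𝓝 p, ‖f z - f p‖ < ε :=
      h1.eventually_lt continuousAt_const (show ‖f p - f p‖ < ε by simp [hε])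
    exact h2.and (hVopen.mem_nhds hp)
  obtain ⟨δ, hδ, hδsub⟩ := Metric.mem_nhds_iff.1 hev
  have hball : ∀ z ∈ ball p δ, ‖f z - f p‖ < ε ∧ z ∈ s ×ˢ Ioo a b := fun z hz => hδsub hz
  rw [Metric.eventually_nhds_iff]
  refine ⟨δ, hδ, fun {h} hh => ?_⟩
  have hhn : ‖h‖ < δ := by rw [← dist_zero_right]; exact hh
  have hpd : p + h ∈ ball p δ := by
    rw [Metric.mem_ball, dist_eq_norm]
    simpa using hhn
  have hmemb : ∀ t ∈ uIcc p.2 (p + h).2, ((p + h).1, t) ∈ ball p δ := by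
    intro t ht
    rw [Metric.mem_ball, Prod.dist_eq]
    have h1 : dist (p + h).1 p.1 < δ := by
      rw [dist_eq_norm]; simpa using lt_of_le_of_lt (norm_fst_le h) hhn
    have h2 : dist t p.2 < δ := by
      rw [Real.dist_eq]
      calc |t - p.2| ≤ |(p + h).2 - p.2| := abs_sub_le_uIcc' ht
        _ = ‖h.2‖ := by rw [Prod.snd_add, add_sub_cancel_left]; rfl
        _ ≤ ‖h‖ := norm_snd_le h
        _ < δ := hhn
    exact max_lt h1 h2
  have hint : IntervalIntegrable (fun t => f ((p + h).1, t)) volume p.2 (p + h).2 := by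
    apply ContinuousOn.intervalIntegrable
    exact hf.comp ((continuous_const.prodMk continuous_id).continuousOn)
      fun t ht => (hball _ (hmemb t ht)).2
  have happ : (ContinuousLinearMap.snd ℝ E ℝ).smulRight (f p) h = h.2 • f p := by simp
  have hconst : h.2 • f p = ∫ t in p.2..(p + h).2, f p := by
    rw [intervalIntegral.integral_const]
    congr 1
    rw [Prod.snd_add, add_sub_cancel_left]
  simp only [intervalIntegral.integral_same, sub_zero]
  rw [happ, hconst, ← intervalIntegral.integral_sub hint intervalIntegrable_const]
  have hb1 : ‖∫ t in p.2..(p + h).2, (f ((p + h).1, t) - f p)‖ ≤ ε * |(p + h).2 - p.2| := by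
    apply intervalIntegral.norm_integral_le_of_norm_le_const
    intro t ht
    exact (hball _ (hmemb t (uIoc_subset_uIcc ht))).1.le
  refine hb1.trans ?_
  apply mul_le_mul_of_nonneg_left _ hε.le
  rw [Prod.snd_add, add_sub_cancel_left]
  exact norm_snd_le h


lemma contOn_compPrj {α : Type*} [TopologicalSpace α] {W : Set α} {g : α → (E × ℝ) →L[ℝ] F}
    (hg : ContinuousOn g W) :
    ContinuousOn (fun z => (g z).comp (prjE E)) W := by
  have h : Continuous fun L : (E × ℝ) →L[ℝ] F => L.comp (prjE E) :=
    ((ContinuousLinearMap.compL ℝ (E × ℝ) (E × ℝ) F).flip (prjE E)).continuous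
  exact h.comp_continuousOn hg

lemma hasFDerivAt_Jop (hs : IsOpen s) (ha : a < 0) (hb : 0 < b)
    (hf : ContDiffOn ℝ 1 f (s ×ˢ Ioo a b)) (hp : p ∈ s ×ˢ Ioo a b) :
    HasFDerivAt (Jop f) (Lop f p) p := by
  have hVopen : IsOpen (s ×ˢ Ioo a b) := hs.prod isOpen_Ioo
  obtain ⟨r, hr, c, d, hac, hdb, hballs, huIcc, hIcc⟩ := locK hs ha hb hp
  have hKV : closedBall p.1 r ×ˢ Icc c d ⊆ s ×ˢ Ioo a b := Set.prod_mono hballs hIcc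
  have hK : IsCompact (closedBall p.1 r ×ˢ Icc c d) :=
    (isCompact_closedBall p.1 r).prod isCompact_Icc
  have hfc : ContinuousOn f (s ×ˢ Ioo a b) := hf.continuousOn
  have hfd : ContinuousOn (fderiv ℝ f) (s ×ˢ Ioo a b) :=
    hf.continuousOn_fderiv_of_isOpen hVopen le_rfl
  obtain ⟨M, hM⟩ := hK.exists_bound_of_continuousOn (hfd.mono hKV)
  have huIccp : uIcc (0:ℝ) p.2 ⊆ Icc c d := huIcc p.2 (by simp [hr.le])
  have hIoc_sub : Set.uIoc (0:ℝ) p.2 ⊆ Icc c d := uIoc_subset_uIcc.trans huIccp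
  have hfst : ∀ q : E × ℝ, q ∈ ball p r → q.1 ∈ closedBall p.1 r := by
    intro q hq
    have h1 : dist q.1 p.1 ≤ dist q p := by rw [Prod.dist_eq]; exact le_max_left _ _
    exact mem_closedBall.2 (le_trans h1 (mem_ball.1 hq).le)
  have hmemK : ∀ q : E × ℝ, q ∈ ball p r → ∀ t ∈ Icc c d, (q.1, t) ∈ s ×ˢ Ioo a b :=
    fun q hq t ht => hKV ⟨hfst q hq, ht⟩
  have hsliceC : ∀ x ∈ closedBall p.1 r, ContinuousOn (fun t => f (x, t)) (Icc c d) :=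
    fun x hx => hfc.comp ((continuous_const.prodMk continuous_id).continuousOn)
      fun t ht => hKV ⟨hx, ht⟩
  have H1 : HasFDerivAt (fun q : E × ℝ => ∫ t in (0:ℝ)..p.2, f (q.1, t))
      (∫ t in (0:ℝ)..p.2, (fderiv ℝ f (p.1, t)).comp (prjE E)) p := by
    apply intervalIntegral.hasFDerivAt_integral_of_dominated_of_fderiv_le
      (F := fun (q : E × ℝ) t => f (q.1, t))
      (F' := fun (q : E × ℝ) t => (fderiv ℝ f (q.1, t)).comp (prjE E))
      (bound := fun _ => M) (ball_mem_nhds p hr)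
    · filter_upwards [ball_mem_nhds p hr] with q hq
      exact ((hsliceC q.1 (hfst q hq)).mono hIoc_sub).aestronglyMeasurable measurableSet_uIoc
    · exact ((hsliceC p.1 (mem_closedBall_self hr.le)).mono huIccp).intervalIntegrable
    · apply ContinuousOn.aestronglyMeasurable _ measurableSet_uIoc
      apply ContinuousOn.mono _ hIoc_sub
      apply contOn_compPrj (W := Icc c d) (g := fun t : ℝ => fderiv ℝ f (p.1, t))
      exact hfd.comp ((continuous_const.prodMk continuous_id).continuousOn)
        fun t ht => hmemK p (mem_ball_self hr) t ht
    · refine Filter.Eventually.of_forall fun t ht q hq => ?_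
      calc ‖(fderiv ℝ f (q.1, t)).comp (prjE E)‖
          ≤ ‖fderiv ℝ f (q.1, t)‖ * ‖prjE E‖ := ContinuousLinearMap.opNorm_comp_le _ _
        _ ≤ M * 1 := mul_le_mul (hM (q.1, t) ⟨hfst q hq, hIoc_sub ht⟩) norm_prjE_le
            (norm_nonneg _) (le_trans (norm_nonneg _) (hM (q.1, t) ⟨hfst q hq, hIoc_sub ht⟩))
        _ = M := mul_one M
    · exact intervalIntegrable_const
    · refine Filter.Eventually.of_forall fun t ht q hq => ?_
      have hd : DifferentiableAt ℝ f (q.1, t) :=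
        (hf.differentiableOn one_ne_zero).differentiableAt
          (hVopen.mem_nhds (hmemK q hq t (hIoc_sub ht)))
      exact hd.hasFDerivAt.comp q (HasFDerivAt.prodMk hasFDerivAt_fst (hasFDerivAt_const t q))
  have H2 := hasFDerivAt_moving hs ha hb hfc hp
  have H12 := H1.add H2
  have heq : (fun q : E × ℝ => (∫ t in (0:ℝ)..p.2, f (q.1, t)) + ∫ t in p.2..q.2, f (q.1, t))
      =ᶠ[𝓝 p] Jop f := by
    obtain ⟨r₂, hr₂, hball₂⟩ := Metric.mem_nhds_iff.1 (hVopen.mem_nhds hp)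
    filter_upwards [ball_mem_nhds p (lt_min hr hr₂)] with q hq
    have hqV : q ∈ s ×ˢ Ioo a b := hball₂ (ball_subset_ball (min_le_right _ _) hq)
    have hq_r : q ∈ ball p r := ball_subset_ball (min_le_left _ _) hq
    have i1 : IntervalIntegrable (fun t => f (q.1, t)) volume 0 p.2 :=
      ((hsliceC q.1 (hfst q hq_r)).mono huIccp).intervalIntegrable
    have i2 : IntervalIntegrable (fun t => f (q.1, t)) volume p.2 q.2 := by
      apply ContinuousOn.intervalIntegrable
      exact hfc.comp ((continuous_const.prodMk continuous_id).continuousOn)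
        fun t ht => ⟨hqV.1, Set.ordConnected_Ioo.uIcc_subset hp.2 hqV.2 ht⟩
    exact intervalIntegral.integral_add_adjacent_intervals i1 i2
  exact H12.congr_of_eventuallyEq heq.symm

lemma fderiv_Jop (hs : IsOpen s) (ha : a < 0) (hb : 0 < b)
    (hf : ContDiffOn ℝ 1 f (s ×ˢ Ioo a b)) (hp : p ∈ s ×ˢ Ioo a b) :
    fderiv ℝ (Jop f) p = Lop f p :=
  (hasFDerivAt_Jop hs ha hb hf hp).fderiv

lemma continuousOn_Lop (hs : IsOpen s) (ha : a < 0) (hb : 0 < b)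
    (hf : ContDiffOn ℝ 1 f (s ×ˢ Ioo a b)) :
    ContinuousOn (Lop f) (s ×ˢ Ioo a b) := by
  have hVopen : IsOpen (s ×ˢ Ioo a b) := hs.prod isOpen_Ioo
  have hfd : ContinuousOn (fderiv ℝ f) (s ×ˢ Ioo a b) :=
    hf.continuousOn_fderiv_of_isOpen hVopen le_rfl
  have hg : ContinuousOn (fun z : E × ℝ => (fderiv ℝ f z).comp (prjE E)) (s ×ˢ Ioo a b) :=
    contOn_compPrj hfd
  have h1 : ContinuousOn
      (fun q : E × ℝ => ∫ t in (0:ℝ)..q.2, (fderiv ℝ f (q.1, t)).comp (prjE E))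
      (s ×ˢ Ioo a b) :=
    fun q hq => (continuousAt_Jop hs ha hb hg hq).continuousWithinAt
  have h2 : ContinuousOn (fun q : E × ℝ => (ContinuousLinearMap.snd ℝ E ℝ).smulRight (f q))
      (s ×ˢ Ioo a b) := by
    have hc : Continuous fun v : F => (ContinuousLinearMap.smulRightL ℝ (E × ℝ) F
        (ContinuousLinearMap.snd ℝ E ℝ)) v :=
      (ContinuousLinearMap.smulRightL ℝ (E × ℝ) F (ContinuousLinearMap.snd ℝ E ℝ)).continuous
    exact hc.comp_continuousOn hf.continuousOn
  exact h1.add h2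

lemma contDiffOn_Jop_one (hs : IsOpen s) (ha : a < 0) (hb : 0 < b)
    (hf : ContDiffOn ℝ 1 f (s ×ˢ Ioo a b)) :
    ContDiffOn ℝ 1 (Jop f) (s ×ˢ Ioo a b) := by
  have hVopen : IsOpen (s ×ˢ Ioo a b) := hs.prod isOpen_Ioo
  have h01 : (1 : WithTop ℕ∞) = 0 + 1 := by norm_num
  rw [h01, contDiffOn_succ_iff_fderiv_of_isOpen hVopen]
  refine ⟨fun q hq =>
      (hasFDerivAt_Jop hs ha hb hf hq).differentiableAt.differentiableWithinAt, ?_, ?_⟩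
  · intro h; exact absurd h (by simp)
  · rw [contDiffOn_zero]
    exact (continuousOn_Lop hs ha hb hf).congr
      fun q hq => (hasFDerivAt_Jop hs ha hb hf hq).fderiv

lemma contDiffOn_Jop_two (hs : IsOpen s) (ha : a < 0) (hb : 0 < b)
    (hf : ContDiffOn ℝ 2 f (s ×ˢ Ioo a b)) :
    ContDiffOn ℝ 2 (Jop f) (s ×ˢ Ioo a b) := by
  have hVopen : IsOpen (s ×ˢ Ioo a b) := hs.prod isOpen_Ioo
  have h12 : (2 : WithTop ℕ∞) = 1 + 1 := by norm_num
  rw [h12, contDiffOn_succ_iff_fderiv_of_isOpen hVopen]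
  have hf1 : ContDiffOn ℝ 1 f (s ×ˢ Ioo a b) := hf.of_le one_le_two
  refine ⟨fun q hq =>
      (hasFDerivAt_Jop hs ha hb hf1 hq).differentiableAt.differentiableWithinAt, ?_, ?_⟩
  · intro h; exact absurd h (by simp)
  · have hfd1 : ContDiffOn ℝ 1 (fderiv ℝ f) (s ×ˢ Ioo a b) :=
      hf.fderiv_of_isOpen hVopen (by norm_num)
    have hg1 : ContDiffOn ℝ 1 (fun z : E × ℝ => (fderiv ℝ f z).comp (prjE E))
        (s ×ˢ Ioo a b) :=
      (((ContinuousLinearMap.compL ℝ (E × ℝ) (E × ℝ) F).flip (prjE E)).contDiff).comp_contDiffOn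
        hfd1
    have hJg : ContDiffOn ℝ 1 (Jop (fun z : E × ℝ => (fderiv ℝ f z).comp (prjE E)))
        (s ×ˢ Ioo a b) := contDiffOn_Jop_one hs ha hb hg1
    have hs2 : ContDiffOn ℝ 1
        (fun q : E × ℝ => (ContinuousLinearMap.snd ℝ E ℝ).smulRight (f q)) (s ×ˢ Ioo a b) :=
      ((ContinuousLinearMap.smulRightL ℝ (E × ℝ) F
        (ContinuousLinearMap.snd ℝ E ℝ)).contDiff).comp_contDiffOn hf1
    have hL : ContDiffOn ℝ 1 (Lop f) (s ×ˢ Ioo a b) := hJg.add hs2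
    exact hL.congr fun q hq => (hasFDerivAt_Jop hs ha hb hf1 hq).fderiv

lemma integrable_fderiv_comp (hs : IsOpen s) (ha : a < 0) (hb : 0 < b)
    (hf : ContDiffOn ℝ 1 f (s ×ˢ Ioo a b)) (hp : p ∈ s ×ˢ Ioo a b) :
    IntervalIntegrable (fun t => (fderiv ℝ f (p.1, t)).comp (prjE E)) volume 0 p.2 := by
  have hVopen : IsOpen (s ×ˢ Ioo a b) := hs.prod isOpen_Ioo
  have hfd : ContinuousOn (fderiv ℝ f) (s ×ˢ Ioo a b) :=
    hf.continuousOn_fderiv_of_isOpen hVopen le_rfl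
  apply ContinuousOn.intervalIntegrable
  apply contOn_compPrj (g := fun t : ℝ => fderiv ℝ f (p.1, t)) (W := uIcc 0 p.2)
  exact hfd.comp ((continuous_const.prodMk continuous_id).continuousOn)
    fun t ht => ⟨hp.1, mem_slice ha hb hp.2 ht⟩

lemma secondDeriv_Jop_vert (hs : IsOpen s) (ha : a < 0) (hb : 0 < b)
    (hf : ContDiffOn ℝ 2 f (s ×ˢ Ioo a b)) (hp : p ∈ s ×ˢ Ioo a b) :
    fderiv ℝ (fun q => fderiv ℝ (Jop f) q ((0 : E), (1 : ℝ))) p = fderiv ℝ f p := by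
  have hVopen : IsOpen (s ×ˢ Ioo a b) := hs.prod isOpen_Ioo
  have hf1 : ContDiffOn ℝ 1 f (s ×ˢ Ioo a b) := hf.of_le one_le_two
  apply Filter.EventuallyEq.fderiv_eq
  filter_upwards [hVopen.mem_nhds hp] with q hq
  rw [fderiv_Jop hs ha hb hf1 hq]
  show Lop f q ((0 : E), (1 : ℝ)) = f q
  rw [Lop, ContinuousLinearMap.add_apply,
    ContinuousLinearMap.intervalIntegral_apply (integrable_fderiv_comp hs ha hb hf1 hq),
    ContinuousLinearMap.smulRight_apply]
  simp [show ((0:E), (0:ℝ)) = 0 from rfl]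

lemma secondDeriv_Jop_horiz (hs : IsOpen s) (ha : a < 0) (hb : 0 < b)
    (hf : ContDiffOn ℝ 2 f (s ×ˢ Ioo a b)) (hp : p ∈ s ×ˢ Ioo a b) (w : E × ℝ) (hw : w.2 = 0) :
    fderiv ℝ (fun q => fderiv ℝ (Jop f) q w) p w =
      ∫ t in (0:ℝ)..p.2, fderiv ℝ (fun z => fderiv ℝ f z w) (p.1, t) w := by
  have hVopen : IsOpen (s ×ˢ Ioo a b) := hs.prod isOpen_Ioo
  have hf1 : ContDiffOn ℝ 1 f (s ×ˢ Ioo a b) := hf.of_le one_le_two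
  have hgw : ContDiffOn ℝ 1 (fun z => fderiv ℝ f z w) (s ×ˢ Ioo a b) :=
    (ContinuousLinearMap.apply ℝ F w).contDiff.comp_contDiffOn
      (hf.fderiv_of_isOpen hVopen (by norm_num))
  have hwp : prjE E w = w := by
    rw [prjE_apply]; exact Prod.ext rfl hw.symm
  have heq : (fun q => fderiv ℝ (Jop f) q w) =ᶠ[𝓝 p] Jop (fun z => fderiv ℝ f z w) := by
    filter_upwards [hVopen.mem_nhds hp] with q hq
    rw [fderiv_Jop hs ha hb hf1 hq]
    show Lop f q w = Jop (fun z => fderiv ℝ f z w) q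
    rw [Lop, ContinuousLinearMap.add_apply,
      ContinuousLinearMap.intervalIntegral_apply (integrable_fderiv_comp hs ha hb hf1 hq),
      ContinuousLinearMap.smulRight_apply]
    simp only [ContinuousLinearMap.coe_comp', Function.comp_apply, hwp,
      ContinuousLinearMap.coe_snd', hw, zero_smul, add_zero]
    rfl
  rw [heq.fderiv_eq, (hasFDerivAt_Jop hs ha hb hgw hp).fderiv]
  show Lop (fun z => fderiv ℝ f z w) p w = _
  rw [Lop, ContinuousLinearMap.add_apply,
    ContinuousLinearMap.intervalIntegral_apply (integrable_fderiv_comp hs ha hb hgw hp),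
    ContinuousLinearMap.smulRight_apply]
  simp only [ContinuousLinearMap.coe_comp', Function.comp_apply, hwp,
    ContinuousLinearMap.coe_snd', hw, zero_smul, add_zero]

end Proper
end Aux


/-- Points of the cylinder `D × (0,ℓ)` are pairs `(x, y)` with `x ∈ ℝ^m`, `y ∈ ℝ`. -/
abbrev Cyl (m : ℕ) := EuclideanSpace ℝ (Fin m) × ℝ

/-- The Laplacian on the cylinder: sum of all second partial derivatives. -/
def cylLap {m : ℕ} (u : Cyl m → ℝ) (p : Cyl m) : ℝ :=
  (∑ i : Fin m, fderiv ℝ (fun q => fderiv ℝ u q (EuclideanSpace.single i 1, 0)) p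
      (EuclideanSpace.single i 1, 0)) +
    fderiv ℝ (fun q => fderiv ℝ u q ((0 : EuclideanSpace ℝ (Fin m)), (1 : ℝ))) p
      ((0 : EuclideanSpace ℝ (Fin m)), (1 : ℝ))

/-- The Laplacian on `ℝ^m`: sum of second partial derivatives. -/
def lapD {m : ℕ} (ψ : EuclideanSpace ℝ (Fin m) → ℝ) (x : EuclideanSpace ℝ (Fin m)) : ℝ :=
  ∑ i : Fin m, fderiv ℝ (fun y => fderiv ℝ ψ y (EuclideanSpace.single i 1)) x
    (EuclideanSpace.single i 1)

/-- `u` is C² on an open neighborhood of the closure of `A`. -/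
def IsC2OnClosure {Y : Type*} [NormedAddCommGroup Y] [NormedSpace ℝ Y]
    (u : Y → ℝ) (A : Set Y) : Prop :=
  ∃ U, IsOpen U ∧ closure A ⊆ U ∧ ContDiffOn ℝ 2 u U

/-- **Commutativity**: if `u` is C² on the closed cylinder and `u_y(x,0) = 0`, then
`Ju(x,y) = ∫₀ʸ u(x,t) dt` is C² on the open cylinder and `Δ(Ju)(x,y) = ∫₀ʸ Δu(x,t) dt`. -/
theorem commutativity_cylinder {n : ℕ} (hn : 2 ≤ n)
    (D : Set (EuclideanSpace ℝ (Fin (n - 1)))) (hD : IsOpen D) (hDb : IsBounded D)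
    {ℓ : ℝ} (hℓ : 0 < ℓ) (u : Cyl (n - 1) → ℝ)
    (hu : IsC2OnClosure u (D ×ˢ Ioo (0 : ℝ) ℓ))
    (huy : ∀ x ∈ D, fderiv ℝ u (x, (0 : ℝ)) ((0 : EuclideanSpace ℝ (Fin (n - 1))), (1 : ℝ)) = 0) :
    ContDiffOn ℝ 2 (fun p : Cyl (n - 1) => ∫ t in (0 : ℝ)..p.2, u (p.1, t))
        (D ×ˢ Ioo (0 : ℝ) ℓ) ∧
      ∀ p ∈ D ×ˢ Ioo (0 : ℝ) ℓ,
        cylLap (fun q : Cyl (n - 1) => ∫ t in (0 : ℝ)..q.2, u (q.1, t)) p =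
          ∫ t in (0 : ℝ)..p.2, cylLap u (p.1, t) := by
  obtain ⟨U, hUopen, hUsub, huC2⟩ := hu
  have hclos : ∀ x₀ ∈ D, ∀ t ∈ Icc (0:ℝ) ℓ,
      ((x₀ : EuclideanSpace ℝ (Fin (n - 1))), t) ∈ U := by
    intro x₀ hx t ht
    apply hUsub
    rw [closure_prod_eq, closure_Ioo hℓ.ne]
    exact ⟨subset_closure hx, ht⟩
  have key : ∀ p : Cyl (n - 1), p ∈ D ×ˢ Ioo (0:ℝ) ℓ → ∃ ε > 0,
      ball p.1 ε ×ˢ Ioo (-ε) (ℓ + ε) ⊆ U ∧ p ∈ ball p.1 ε ×ˢ Ioo (-ε) (ℓ + ε) := by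
    intro p hp
    have hKc : IsCompact ({p.1} ×ˢ Icc (0:ℝ) ℓ) := isCompact_singleton.prod isCompact_Icc
    have hKU : {p.1} ×ˢ Icc (0:ℝ) ℓ ⊆ U := by
      rintro ⟨x, t⟩ ⟨hx, ht⟩
      rw [mem_singleton_iff] at hx
      subst hx
      exact hclos _ hp.1 t ht
    obtain ⟨δ, hδ, hth⟩ := hKc.exists_thickening_subset_open hUopen hKU
    refine ⟨δ/2, by linarith, ?_, ?_⟩
    · rintro ⟨x, y⟩ ⟨hx, hy⟩
      dsimp only at hx hy
      apply hth
      rw [Metric.mem_thickening_iff]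
      refine ⟨(p.1, min (max y 0) ℓ),
        ⟨rfl, ⟨le_min (le_max_right _ _) hℓ.le, min_le_right _ _⟩⟩, ?_⟩
      rw [Prod.dist_eq]
      dsimp only
      apply max_lt
      · exact lt_of_lt_of_le (mem_ball.1 hx) (by linarith)
      · rw [Real.dist_eq]
        rcases le_total y 0 with h0 | h0
        · rw [max_eq_right h0, min_eq_left hℓ.le, abs_of_nonpos (by linarith)]
          have := hy.1
          linarith
        · rcases le_total y ℓ with h1 | h1
          · rw [max_eq_left h0, min_eq_left h1]
            simpa using hδ
          · rw [max_eq_left h0, min_eq_right h1, abs_of_nonneg (by linarith)]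
            have := hy.2
            linarith
    · exact ⟨mem_ball_self (by linarith), ⟨by linarith [hp.2.1], by linarith [hp.2.2]⟩⟩
  constructor
  · intro p hp
    obtain ⟨ε, hε, hVU, hpV⟩ := key p hp
    exact ((contDiffOn_Jop_two isOpen_ball (neg_lt_zero.2 hε) (by linarith)
      (huC2.mono hVU)).contDiffAt
      ((isOpen_ball.prod isOpen_Ioo).mem_nhds hpV)).contDiffWithinAt
  · intro p hp
    obtain ⟨ε, hε, hVU, hpV⟩ := key p hp
    have haV : -ε < 0 := neg_lt_zero.2 hε
    have hbV : (0:ℝ) < ℓ + ε := by linarith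
    have h2 : ContDiffOn ℝ 2 u (ball p.1 ε ×ˢ Ioo (-ε) (ℓ + ε)) := huC2.mono hVU
    have hVopen : IsOpen (ball p.1 ε ×ˢ Ioo (-ε) (ℓ + ε)) := isOpen_ball.prod isOpen_Ioo
    show cylLap (Jop u) p = ∫ t in (0:ℝ)..p.2, cylLap u (p.1, t)
    have hSw : ∀ w w' : Cyl (n - 1), ContinuousOn
        (fun z => fderiv ℝ (fun q => fderiv ℝ u q w) z w') (ball p.1 ε ×ˢ Ioo (-ε) (ℓ + ε)) := by
      intro w w'
      have hgC1 : ContDiffOn ℝ 1 (fun q => fderiv ℝ u q w) (ball p.1 ε ×ˢ Ioo (-ε) (ℓ + ε)) :=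
        (ContinuousLinearMap.apply ℝ ℝ w).contDiff.comp_contDiffOn
          (h2.fderiv_of_isOpen hVopen (by norm_num))
      exact (ContinuousLinearMap.apply ℝ ℝ w').continuous.comp_continuousOn
        (hgC1.continuousOn_fderiv_of_isOpen hVopen le_rfl)
    have hslice : ∀ t ∈ uIcc (0:ℝ) p.2, (p.1, t) ∈ ball p.1 ε ×ˢ Ioo (-ε) (ℓ + ε) :=
      fun t ht => ⟨mem_ball_self hε, mem_slice haV hbV hpV.2 ht⟩
    have hint : ∀ h : Cyl (n - 1) → ℝ, ContinuousOn h (ball p.1 ε ×ˢ Ioo (-ε) (ℓ + ε)) →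
        IntervalIntegrable (fun t => h (p.1, t)) volume 0 p.2 :=
      fun h hh => (hh.comp ((continuous_const.prodMk continuous_id).continuousOn)
        fun t ht => hslice t ht).intervalIntegrable
    have hSint : ∀ w w' : Cyl (n - 1), IntervalIntegrable
        (fun t => fderiv ℝ (fun q => fderiv ℝ u q w) (p.1, t) w') volume 0 p.2 :=
      fun w w' => hint _ (hSw w w')
    have hgC1e : ContDiffOn ℝ 1
        (fun q => fderiv ℝ u q ((0 : EuclideanSpace ℝ (Fin (n - 1))), (1:ℝ)))
        (ball p.1 ε ×ˢ Ioo (-ε) (ℓ + ε)) :=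
      (ContinuousLinearMap.apply ℝ ℝ _).contDiff.comp_contDiffOn
        (h2.fderiv_of_isOpen hVopen (by norm_num))
    have hFTC : (∫ t in (0:ℝ)..p.2, fderiv ℝ
          (fun q => fderiv ℝ u q ((0 : EuclideanSpace ℝ (Fin (n - 1))), (1:ℝ))) (p.1, t)
          ((0 : EuclideanSpace ℝ (Fin (n - 1))), (1:ℝ)))
        = fderiv ℝ u (p.1, p.2) ((0 : EuclideanSpace ℝ (Fin (n - 1))), (1:ℝ))
          - fderiv ℝ u (p.1, 0) ((0 : EuclideanSpace ℝ (Fin (n - 1))), (1:ℝ)) := by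
      apply intervalIntegral.integral_eq_sub_of_hasDerivAt
        (f := fun t => fderiv ℝ u (p.1, t) ((0 : EuclideanSpace ℝ (Fin (n - 1))), (1:ℝ)))
      · intro t ht
        have hd : DifferentiableAt ℝ
            (fun q => fderiv ℝ u q ((0 : EuclideanSpace ℝ (Fin (n - 1))), (1:ℝ))) (p.1, t) :=
          (hgC1e.differentiableOn one_ne_zero).differentiableAt (hVopen.mem_nhds (hslice t ht))
        exact hd.hasFDerivAt.comp_hasDerivAt t
          (HasDerivAt.prodMk (hasDerivAt_const t p.1) (hasDerivAt_id t))
      · exact hSint _ _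
    have hSg : IntervalIntegrable (fun t => ∑ i : Fin (n - 1),
        fderiv ℝ (fun q => fderiv ℝ u q (EuclideanSpace.single i 1, 0)) (p.1, t)
          (EuclideanSpace.single i 1, 0)) volume 0 p.2 :=
      ((continuousOn_finset_sum (Finset.univ : Finset (Fin (n - 1)))
        (fun i _ => hSw (EuclideanSpace.single i 1, 0) (EuclideanSpace.single i 1, 0))).comp
        ((continuous_const.prodMk continuous_id).continuousOn)
        (fun t ht => hslice t ht)).intervalIntegrable
    simp only [cylLap]
    rw [intervalIntegral.integral_add hSg (hSint _ _)]
    rw [intervalIntegral.integral_finset_sum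
      (fun (i : Fin (n - 1)) _ => hSint (EuclideanSpace.single i 1, 0) (EuclideanSpace.single i 1, 0))]
    rw [hFTC, huy p.1 hp.1, sub_zero]
    congr 1
    · exact Finset.sum_congr rfl fun i _ =>
        secondDeriv_Jop_horiz isOpen_ball haV hbV h2 hpV _ rfl
    · rw [secondDeriv_Jop_vert isOpen_ball haV hbV h2 hpV]
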